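/- Let A be a Codazzi tensor on M^n, n ≥ 3, with exactly two distinct eigenvalue functions μ and λ on an open set, dim V_μ = 1, and let X ∈ V_μ be a unit vector field. Then D_Y μ = (μ − λ)·g(∇_X X, Y) for all Y ∈ V_λ; in particular, D_Y μ = 0 for all Y ∈ V_λ if and only if the integral curves of V_μ are geodesics (∇_X X = 0). -/
import Mathlib


/-- Abstract axiomatization of the space of smooth vector fields `VF` on a
Riemannian manifold with point set `M`: a module over the ring of functions
`M → ℝ`, together with the metric `g`, the Levi-Civita connection `nabla`,
the directional derivative `D`, the gradient `grad` and the Lie bracket,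
satisfying the usual laws. -/
structure RiemannianSetup (M : Type*) (VF : Type*) [AddCommGroup VF]
    [Module (M → ℝ) VF] where
  g : VF → VF → M → ℝ
  nabla : VF → VF → VF
  D : VF → (M → ℝ) → M → ℝ
  grad : (M → ℝ) → VF
  bracket : VF → VF → VF
  g_symm : ∀ X Y, g X Y = g Y X
  g_addLeft : ∀ X Y Z, g (X + Y) Z = g X Z + g Y Z
  g_smulLeft : ∀ (f : M → ℝ) (X Y : VF), g (f • X) Y = f * g X Y
  g_nondeg : ∀ X Y : VF, (∀ Z, g X Z = g Y Z) → X = Y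
  nabla_addRight : ∀ X Y Z, nabla X (Y + Z) = nabla X Y + nabla X Z
  nabla_addLeft : ∀ X Y Z, nabla (X + Y) Z = nabla X Z + nabla Y Z
  nabla_smulLeft : ∀ (f : M → ℝ) (X Y : VF), nabla (f • X) Y = f • nabla X Y
  nabla_leibniz : ∀ (X : VF) (f : M → ℝ) (Y : VF),
    nabla X (f • Y) = D X f • Y + f • nabla X Y
  D_add : ∀ X (f₁ f₂ : M → ℝ), D X (f₁ + f₂) = D X f₁ + D X f₂
  D_mul : ∀ X (f₁ f₂ : M → ℝ), D X (f₁ * f₂) = D X f₁ * f₂ + f₁ * D X f₂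
  D_const : ∀ X (r : ℝ), D X (fun _ => r) = 0
  D_addLeft : ∀ X Y (f : M → ℝ), D (X + Y) f = D X f + D Y f
  D_smulLeft : ∀ (h : M → ℝ) X (f : M → ℝ), D (h • X) f = h * D X f
  compat : ∀ X Y Z, D X (g Y Z) = g (nabla X Y) Z + g Y (nabla X Z)
  torsion_free : ∀ X Y, bracket X Y = nabla X Y - nabla Y X
  grad_spec : ∀ (f : M → ℝ) (Z : VF), g (grad f) Z = D Z f

namespace RiemannianSetup

variable {M VF : Type*} [AddCommGroup VF] [Module (M → ℝ) VF]

/-- Covariant derivative `(∇_X A) Y` of a `(1,1)`-tensor `A`. -/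
def covDeriv (S : RiemannianSetup M VF) (A : VF → VF) (X Y : VF) : VF :=
  S.nabla X (A Y) - A (S.nabla X Y)

/-- A Codazzi tensor: a self-adjoint `(1,1)`-tensor with
`(∇_X A) Y = (∇_Y A) X` for all vector fields `X`, `Y`. -/
def IsCodazzi (S : RiemannianSetup M VF) (A : VF → VF) : Prop :=
  (∀ X Y, S.g (A X) Y = S.g X (A Y)) ∧
  (∀ X Y, S.covDeriv A X Y = S.covDeriv A Y X)

namespace Aux

variable {M VF : Type*} [AddCommGroup VF] [Module (M → ℝ) VF]

lemma g_zeroLeft (S : RiemannianSetup M VF) (Z : VF) : S.g 0 Z = 0 := by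
  rw [← zero_smul (M → ℝ) (0 : VF), S.g_smulLeft, zero_mul]

lemma g_negLeft (S : RiemannianSetup M VF) (U Z : VF) : S.g (-U) Z = - S.g U Z := by
  rw [← neg_one_smul (M → ℝ) U, S.g_smulLeft]; ring

lemma g_subLeft (S : RiemannianSetup M VF) (U V Z : VF) :
    S.g (U - V) Z = S.g U Z - S.g V Z := by
  rw [sub_eq_add_neg, S.g_addLeft, g_negLeft]; ring

lemma g_smulRight (S : RiemannianSetup M VF) (f : M → ℝ) (U V : VF) :
    S.g U (f • V) = f * S.g U V := by
  rw [S.g_symm, S.g_smulLeft, S.g_symm]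

lemma g_addRight (S : RiemannianSetup M VF) (U V W : VF) :
    S.g U (V + W) = S.g U V + S.g U W := by
  rw [S.g_symm, S.g_addLeft, S.g_symm V U, S.g_symm W U]

lemma D_zero (S : RiemannianSetup M VF) (X : VF) : S.D X 0 = 0 :=
  S.D_const X 0

lemma D_one (S : RiemannianSetup M VF) (X : VF) : S.D X 1 = 0 :=
  S.D_const X 1

lemma pi_cancel {M : Type*} (mu lam : M → ℝ) (hdist : ∀ p, mu p ≠ lam p)
    (f : M → ℝ) (h : (mu - lam) * f = 0) : f = 0 := by
  funext p
  have hp := congrFun h p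
  simp only [Pi.mul_apply, Pi.sub_apply, Pi.zero_apply] at hp
  exact (mul_eq_zero.mp hp).resolve_left (sub_ne_zero.mpr (hdist p))

lemma g_nabla_unit (S : RiemannianSetup M VF) (X : VF) (hXunit : S.g X X = 1)
    (W : VF) : S.g (S.nabla W X) X = 0 := by
  have h := S.compat W X X
  rw [hXunit, D_one, S.g_symm X (S.nabla W X)] at h
  funext p
  have hp := congrFun h p
  simp only [Pi.add_apply, Pi.zero_apply] at hp ⊢
  linarith

end Aux

end RiemannianSetup

/-- For a Codazzi tensor with exactly two distinct eigenfunctions `μ`, `λ`,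
`dim V_μ = 1` spanned by the unit field `X`:
`D_Y μ = (μ − λ) g(∇_X X, Y)` for all `Y ∈ V_λ`, and `D_Y μ = 0` for all
`Y ∈ V_λ` iff the integral curves of `V_μ` are geodesics (`∇_X X = 0`). -/
theorem codazzi_mu_derivative_and_geodesic
    {M VF : Type*} [AddCommGroup VF] [Module (M → ℝ) VF]
    (n : ℕ) (hn : 3 ≤ n)
    (S : RiemannianSetup M VF) (A : VF → VF) (hA : S.IsCodazzi A)
    (mu lam : M → ℝ) (hdist : ∀ p, mu p ≠ lam p)
    (X : VF) (hX : A X = mu • X) (hXunit : S.g X X = 1)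
    (hdecomp : ∀ Z : VF, ∃ (c : M → ℝ) (Y : VF),
      A Y = lam • Y ∧ Z = c • X + Y) :
    (∀ Y : VF, A Y = lam • Y →
      S.D Y mu = (mu - lam) * S.g (S.nabla X X) Y) ∧
    ((∀ Y : VF, A Y = lam • Y → S.D Y mu = 0) ↔ S.nabla X X = 0) := by
  open RiemannianSetup.Aux in
  obtain ⟨hsym, hcod⟩ := hA
  have key : ∀ Y : VF, A Y = lam • Y →
      S.D Y mu = (mu - lam) * S.g (S.nabla X X) Y := by
    intro Y hY
    -- Y ⟂ X
    have hYX : S.g Y X = 0 := by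
      have h1 := hsym Y X
      rw [hY, hX, S.g_smulLeft, g_smulRight] at h1
      exact pi_cancel mu lam hdist _ (by linear_combination -h1)
    have hnYX : S.g (S.nabla Y X) X = 0 := g_nabla_unit S X hXunit Y
    -- g(∇_X Y, X) = - g(Y, ∇_X X)
    have hDgYX : S.g (S.nabla X Y) X = - S.g Y (S.nabla X X) := by
      have h := S.compat X Y X
      rw [hYX, D_zero] at h
      linear_combination -h
    have h1 : S.g (S.nabla Y (A X) - A (S.nabla Y X)) X = S.D Y mu := by
      rw [g_subLeft, hX, S.nabla_leibniz, S.g_addLeft, S.g_smulLeft, S.g_smulLeft,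
        hXunit, hsym, hX, g_smulRight, hnYX]
      ring
    have h2 : S.g (S.nabla X (A Y) - A (S.nabla X Y)) X
        = (mu - lam) * S.g (S.nabla X X) Y := by
      rw [g_subLeft, hY, S.nabla_leibniz, S.g_addLeft, S.g_smulLeft, S.g_smulLeft,
        hYX, hsym, hX, g_smulRight, hDgYX, S.g_symm Y (S.nabla X X)]
      ring
    have heq := hcod Y X
    simp only [RiemannianSetup.covDeriv] at heq
    rw [heq] at h1
    rw [← h1]
    exact h2
  refine ⟨key, ?_, ?_⟩
  · intro h0
    apply S.g_nondeg
    intro Z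
    rw [g_zeroLeft]
    obtain ⟨c, Y, hY, hZ⟩ := hdecomp Z
    have hY0 : S.g (S.nabla X X) Y = 0 := by
      have h := h0 Y hY
      rw [key Y hY] at h
      exact pi_cancel mu lam hdist _ h
    have hX0 : S.g (S.nabla X X) X = 0 := g_nabla_unit S X hXunit X
    rw [hZ, g_addRight, g_smulRight, hX0, hY0]
    ring
  · intro h0 Y hY
    rw [key Y hY, h0, g_zeroLeft, mul_zero]
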